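/- Let C = C([-r,0]; Y) with sup norm for a normed space Y, let η : C → [0,r] be Lipschitz with constant L_η with respect to the sup norm, let b∘B be Lipschitz with constant L (i.e., ‖(b∘B)(y₁) − (b∘B)(y₂)‖ ≤ L‖y₁ − y₂‖_Y), and suppose v : [-r,T] → Y is Lipschitz with constant L_v. Define F(φ) = (b∘B)(φ(−η(φ))) for φ ∈ C. Then for u_t, v_t ∈ C([-r,0];Y) which are the time-t segments of functions u, v (with v Lipschitz-L_v), ‖F(u_t) − F(v_t)‖ ≤ L·(1 + L_v·L_η)·‖u_t − v_t‖_C. -/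
import Mathlib


theorem sdd_nonlinearity_lipschitz_estimate
    {Y Z : Type*} [NormedAddCommGroup Y] [NormedSpace ℝ Y]
    [NormedAddCommGroup Z] [NormedSpace ℝ Z]
    (r T L Leta Lv : ℝ) (hr : 0 < r) (hT : 0 < T)
    (hL : 0 ≤ L) (hLeta : 0 ≤ Leta) (hLv : 0 ≤ Lv)
    (η : C(Set.Icc (-r) (0:ℝ), Y) → ℝ)
    (hη_range : ∀ φ, η φ ∈ Set.Icc (0:ℝ) r)
    (hη_lip : ∀ φ ψ, |η φ - η ψ| ≤ Leta * ‖φ - ψ‖)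
    (g : Y → Z) (hg : ∀ y₁ y₂ : Y, ‖g y₁ - g y₂‖ ≤ L * ‖y₁ - y₂‖)
    (u v : ℝ → Y)
    (hv_lip : ∀ s₁ ∈ Set.Icc (-r) T, ∀ s₂ ∈ Set.Icc (-r) T,
      ‖v s₁ - v s₂‖ ≤ Lv * |s₁ - s₂|)
    (t : ℝ) (ht : t ∈ Set.Icc (0:ℝ) T)
    (ut vt : C(Set.Icc (-r) (0:ℝ), Y))
    (hut : ∀ θ : Set.Icc (-r) (0:ℝ), ut θ = u (t + θ.1))
    (hvt : ∀ θ : Set.Icc (-r) (0:ℝ), vt θ = v (t + θ.1)) :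
    ‖g (u (t - η ut)) - g (v (t - η vt))‖ ≤ L * (1 + Lv * Leta) * ‖ut - vt‖ := by
  obtain ⟨ha0, har⟩ := hη_range ut
  obtain ⟨hb0, hbr⟩ := hη_range vt
  obtain ⟨ht0, htT⟩ := ht
  set a := η ut with ha
  set b := η vt with hb
  have hθa : (-a) ∈ Set.Icc (-r) (0:ℝ) := ⟨by linarith, by linarith⟩
  have hua : u (t - a) = ut ⟨-a, hθa⟩ := by rw [hut ⟨-a, hθa⟩, sub_eq_add_neg]
  have hva : v (t - a) = vt ⟨-a, hθa⟩ := by rw [hvt ⟨-a, hθa⟩, sub_eq_add_neg]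
  have h1 : ‖u (t - a) - v (t - a)‖ ≤ ‖ut - vt‖ := by
    rw [hua, hva]
    calc ‖ut ⟨-a, hθa⟩ - vt ⟨-a, hθa⟩‖ = ‖(ut - vt) ⟨-a, hθa⟩‖ := by simp
      _ ≤ ‖ut - vt‖ := ContinuousMap.norm_coe_le_norm _ _
  have hmem1 : t - a ∈ Set.Icc (-r) T := ⟨by linarith, by linarith⟩
  have hmem2 : t - b ∈ Set.Icc (-r) T := ⟨by linarith, by linarith⟩
  have h2 : ‖v (t - a) - v (t - b)‖ ≤ Lv * |a - b| := by
    have h := hv_lip _ hmem1 _ hmem2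
    have he : t - a - (t - b) = -(a - b) := by ring
    rwa [he, abs_neg] at h
  have h3 : |a - b| ≤ Leta * ‖ut - vt‖ := hη_lip ut vt
  calc ‖g (u (t - a)) - g (v (t - b))‖
      ≤ ‖g (u (t - a)) - g (v (t - a))‖ + ‖g (v (t - a)) - g (v (t - b))‖ :=
        norm_sub_le_norm_sub_add_norm_sub _ _ _
    _ ≤ L * ‖u (t - a) - v (t - a)‖ + L * ‖v (t - a) - v (t - b)‖ :=
        add_le_add (hg _ _) (hg _ _)
    _ ≤ L * ‖ut - vt‖ + L * (Lv * (Leta * ‖ut - vt‖)) := by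
        gcongr
        calc ‖v (t - a) - v (t - b)‖ ≤ Lv * |a - b| := h2
          _ ≤ Lv * (Leta * ‖ut - vt‖) := by gcongr
    _ = L * (1 + Lv * Leta) * ‖ut - vt‖ := by ring
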